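/- Let Y ~ χ²(n) (chi-squared with n degrees of freedom). Then for every x > 0, P(Y ≤ n − 2√(nx)) ≤ exp(−x). -/

import Mathlib

open MeasureTheory Real Set ProbabilityTheory

private lemma lm_hasDerivAt (y : ℝ) :
    HasDerivAt (fun u : ℝ => Real.exp (-u - u ^ 2 / 2) - (1 - u))
      ((-1 - y) * Real.exp (-y - y ^ 2 / 2) + 1) y := by
  have h1 : HasDerivAt (fun u : ℝ => -u - u ^ 2 / 2) (-1 - y) y := by
    have := ((hasDerivAt_id y).neg.sub ((hasDerivAt_pow 2 y).div_const 2))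
    exact this.congr_deriv (by norm_num)
  have h2 : HasDerivAt (fun u : ℝ => Real.exp (-u - u ^ 2 / 2))
      (Real.exp (-y - y ^ 2 / 2) * (-1 - y)) y := h1.exp
  have h3 : HasDerivAt (fun u : ℝ => 1 - u) (-1) y := by
    exact ((hasDerivAt_const y (1 : ℝ)).sub (hasDerivAt_id' y)).congr_deriv (by norm_num)
  exact (h2.sub h3).congr_deriv (by ring)

private lemma lm_one_sub_le_exp {u : ℝ} (hu : 0 ≤ u) :
    1 - u ≤ Real.exp (-u - u ^ 2 / 2) := by
  set f : ℝ → ℝ := fun u => Real.exp (-u - u ^ 2 / 2) - (1 - u) with hf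
  have hmono : MonotoneOn f (Ici (0 : ℝ)) := by
    apply monotoneOn_of_deriv_nonneg (convex_Ici 0)
    · exact fun y _ => ((lm_hasDerivAt y).continuousAt).continuousWithinAt
    · exact fun y _ => ((lm_hasDerivAt y).differentiableAt).differentiableWithinAt
    · intro y _
      rw [(lm_hasDerivAt y).deriv]
      have hy : (0:ℝ) ≤ y := by
        have := interior_subset (s := Ici (0:ℝ)) ‹y ∈ interior (Ici (0:ℝ))›
        exact this
      have h1 : (1 + y) ≤ Real.exp (y + y ^ 2 / 2) := by
        have := Real.add_one_le_exp (y + y ^ 2 / 2)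
        nlinarith
      have h2 : (1 + y) * Real.exp (-y - y ^ 2 / 2) ≤ 1 := by
        have hpos := Real.exp_pos (-y - y ^ 2 / 2)
        calc (1 + y) * Real.exp (-y - y ^ 2 / 2)
            ≤ Real.exp (y + y ^ 2 / 2) * Real.exp (-y - y ^ 2 / 2) := by
              exact mul_le_mul_of_nonneg_right h1 hpos.le
          _ = 1 := by rw [← Real.exp_add]; ring_nf; exact Real.exp_zero
      nlinarith
  have h0 : f 0 ≤ f u := hmono (self_mem_Ici) hu hu
  have : f 0 = 0 := by simp [hf]
  simp only [hf] at h0 this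
  linarith

/-- Chernoff bound for the lower tail of the gamma distribution. -/
private lemma gamma_chernoff {a r t b : ℝ} (ha : 0 < a) (hr : 0 < r) (ht : 0 ≤ t) :
    gammaMeasure a r (Set.Iic b) ≤
      ENNReal.ofReal (Real.exp (t * b) * (r / (r + t)) ^ a) := by
  have hrt : 0 < r + t := by linarith
  set c : ℝ := Real.exp (t * b) * (r / (r + t)) ^ a with hc
  have hcnn : 0 ≤ c := by
    apply mul_nonneg (Real.exp_pos _).le
    exact Real.rpow_nonneg (by positivity) _
  have key : ∀ y ∈ Set.Iic b,
      gammaPDF a r y ≤ ENNReal.ofReal c * gammaPDF a (r + t) y := by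
    intro y hy
    rcases lt_or_ge y 0 with hy0 | hy0
    · rw [gammaPDF_of_neg hy0, gammaPDF_of_neg hy0]; simp
    · rw [gammaPDF_of_nonneg hy0, gammaPDF_of_nonneg hy0, ← ENNReal.ofReal_mul hcnn]
      apply ENNReal.ofReal_le_ofReal
      have hrpow : (r / (r + t)) ^ a * (r + t) ^ a = r ^ a := by
        rw [Real.div_rpow hr.le hrt.le, div_mul_cancel₀]
        exact (Real.rpow_pos_of_pos hrt a).ne'
      have hG : 0 < Real.Gamma a := Real.Gamma_pos_of_pos ha
      have hynn : 0 ≤ y ^ (a - 1) := Real.rpow_nonneg hy0 _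
      have hexp : Real.exp (-(r * y)) ≤ Real.exp (t * b) * Real.exp (-((r + t) * y)) := by
        rw [← Real.exp_add]
        apply Real.exp_le_exp.mpr
        have hyb : y ≤ b := hy
        have : 0 ≤ t * (b - y) := mul_nonneg ht (by linarith)
        nlinarith
      calc r ^ a / Real.Gamma a * y ^ (a - 1) * Real.exp (-(r * y))
          ≤ r ^ a / Real.Gamma a * y ^ (a - 1) *
              (Real.exp (t * b) * Real.exp (-((r + t) * y))) := by
            apply mul_le_mul_of_nonneg_left hexp (by positivity)
        _ = c * ((r + t) ^ a / Real.Gamma a * y ^ (a - 1) * Real.exp (-((r + t) * y))) := by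
            rw [hc, ← hrpow]; ring
  have hmeas : Measurable (gammaPDF a (r + t)) :=
    (measurable_gammaPDFReal a (r + t)).ennreal_ofReal
  calc gammaMeasure a r (Set.Iic b)
      = ∫⁻ y in Set.Iic b, gammaPDF a r y := by
        rw [gammaMeasure, withDensity_apply _ measurableSet_Iic]
    _ ≤ ∫⁻ y in Set.Iic b, ENNReal.ofReal c * gammaPDF a (r + t) y :=
        setLIntegral_mono' measurableSet_Iic key
    _ = ENNReal.ofReal c * ∫⁻ y in Set.Iic b, gammaPDF a (r + t) y :=
        lintegral_const_mul _ hmeas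
    _ ≤ ENNReal.ofReal c * ∫⁻ y, gammaPDF a (r + t) y := by
        gcongr
        exact Measure.restrict_le_self
    _ = ENNReal.ofReal c := by rw [lintegral_gammaPDF_eq_one ha hrt, mul_one]

/-- Chi-squared lower tail bound (Laurent–Massart): if `Y ~ χ²(n)`, i.e. `Y` has the gamma
distribution with shape `n/2` and rate `1/2`, then for every `x > 0`,
`P(Y ≤ n - 2√(nx)) ≤ exp(-x)`. -/
theorem chi_squared_lower_tail (n : ℕ) (hn : 1 ≤ n) (x : ℝ) (hx : 0 < x) :
    gammaMeasure ((n : ℝ) / 2) (1 / 2)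
        (Set.Iic ((n : ℝ) - 2 * Real.sqrt ((n : ℝ) * x))) ≤
      ENNReal.ofReal (Real.exp (-x)) := by
  have hnpos : (0 : ℝ) < n := by exact_mod_cast hn
  set s : ℝ := Real.sqrt ((n : ℝ) * x) with hs_def
  have hs : 0 < s := Real.sqrt_pos.mpr (by positivity)
  have hs2 : s ^ 2 = (n : ℝ) * x := Real.sq_sqrt (by positivity)
  set b : ℝ := (n : ℝ) - 2 * s with hb_def
  rcases le_or_gt b 0 with hb | hb
  · -- the set is essentially contained in the negatives, so measure is 0
    have : gammaMeasure ((n : ℝ) / 2) (1 / 2) (Set.Iic b) = 0 := by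
      rw [gammaMeasure, withDensity_apply _ measurableSet_Iic,
        ← setLIntegral_congr (Iio_ae_eq_Iic (a := b))]
      exact lintegral_gammaPDF_of_nonpos hb
    rw [this]
    exact zero_le
  · set t : ℝ := ((n : ℝ) - b) / (2 * b) with ht_def
    have ht : 0 ≤ t := by
      apply div_nonneg _ (by linarith)
      nlinarith
    refine le_trans (gamma_chernoff (by positivity) (by norm_num) ht) ?_
    apply ENNReal.ofReal_le_ofReal
    have htb : t * b = s := by
      rw [ht_def]
      field_simp
      nlinarith
    have hfrac : (1 / 2 : ℝ) / (1 / 2 + t) = b / n := by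
      have hsum : (1 / 2 : ℝ) + t = (n : ℝ) / (2 * b) := by
        rw [ht_def]; field_simp; ring
      rw [hsum]
      field_simp [hb.ne', hnpos.ne']
    rw [htb, hfrac]
    -- now show exp s * (b/n) ^ (n/2) ≤ exp (-x)
    set u : ℝ := 2 * s / n with hu_def
    have hu : 0 ≤ u := by positivity
    have hbn : b / n = 1 - u := by
      rw [hb_def, hu_def]; field_simp
    have hkey : (b / n : ℝ) ^ ((n : ℝ) / 2) ≤
        Real.exp ((-u - u ^ 2 / 2) * ((n : ℝ) / 2)) := by
      rw [Real.exp_mul]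
      apply Real.rpow_le_rpow (by positivity) _ (by positivity)
      rw [hbn]
      exact lm_one_sub_le_exp hu
    calc Real.exp s * (b / n : ℝ) ^ ((n : ℝ) / 2)
        ≤ Real.exp s * Real.exp ((-u - u ^ 2 / 2) * ((n : ℝ) / 2)) := by
          exact mul_le_mul_of_nonneg_left hkey (Real.exp_pos s).le
      _ = Real.exp (s + (-u - u ^ 2 / 2) * ((n : ℝ) / 2)) := (Real.exp_add _ _).symm
      _ = Real.exp (-x) := by
          congr 1
          rw [hu_def]
          field_simp
          nlinarith
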